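/- For b ≥ 0, λ ≥ 0, α > β > 0, and s > 0 sufficiently large, the function f(t) = Σ_{r=0}^∞ (−λ)^r t^{(α−β)r+α−1} E^{r+1}_{α, α+(α−β)r}(−b t^α) satisfies L[f](s) = 1/(s^α + λ s^β + b), where L is the Laplace transform. -/

import Mathlib

open MeasureTheory Real

lemma auxRow {z : ℝ} (hz : |z| < 1) (c : ℝ) (r : ℕ) :
    HasSum (fun n : ℕ => ((r + n).choose n : ℝ) * c * z ^ n) (c * (1 / (1 - z) ^ (r + 1))) := by
  have h := (hasSum_choose_mul_geometric_of_norm_lt_one (𝕜 := ℝ) r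
    (by rwa [Real.norm_eq_abs])).mul_left c
  convert h using 2 with n
  · rfl
  rw [Nat.add_comm r n, Nat.choose_symm_add]
  ring

lemma auxSummable {x y : ℝ} (h : |x| + |y| < 1) :
    Summable (fun p : ℕ × ℕ => ((p.1 + p.2).choose p.2 : ℝ) * x ^ p.1 * y ^ p.2) := by
  have hy1 : |y| < 1 := lt_of_le_of_lt (le_add_of_nonneg_left (abs_nonneg x)) h
  have hx1 : |x| < 1 - |y| := by linarith
  have h1y : (0:ℝ) < 1 - |y| := lt_of_le_of_lt (abs_nonneg x) hx1
  have habs : Summable (fun p : ℕ × ℕ => ((p.1 + p.2).choose p.2 : ℝ) * |x| ^ p.1 * |y| ^ p.2) := by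
    refine (summable_prod_of_nonneg ?_).2 ⟨fun r => (auxRow (by rwa [abs_abs]) (|x| ^ r) r).summable, ?_⟩
    · intro p; positivity
    · have hts : ∀ r : ℕ, ∑' n : ℕ, ((r + n).choose n : ℝ) * |x| ^ r * |y| ^ n
          = (1 / (1 - |y|)) * (|x| / (1 - |y|)) ^ r := by
        intro r
        rw [(auxRow (by rwa [abs_abs]) (|x| ^ r) r).tsum_eq, div_pow, pow_succ, one_div, mul_inv, one_div]
        ring
      simp only [hts]
      exact (summable_geometric_of_lt_one (by positivity)
        (by rw [div_lt_one h1y]; exact hx1)).mul_left _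
  rw [← summable_abs_iff]
  convert habs using 1
  · rfl
  funext p
  simp [abs_mul, abs_pow, abs_abs]

lemma auxTsum {x y : ℝ} (h : |x| + |y| < 1) :
    ∑' p : ℕ × ℕ, ((p.1 + p.2).choose p.2 : ℝ) * x ^ p.1 * y ^ p.2 = 1 / (1 - x - y) := by
  have hy1 : |y| < 1 := lt_of_le_of_lt (le_add_of_nonneg_left (abs_nonneg x)) h
  have hx1 : |x| < 1 - |y| := by linarith
  have h1y : (0:ℝ) < 1 - y := by have := abs_lt.1 hy1; linarith
  have h1xy : (0:ℝ) < 1 - x - y := by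
    have h1 := le_abs_self x; have h2 := le_abs_self y; linarith
  have hsum := auxSummable h
  rw [Summable.tsum_prod' hsum (fun r => hsum.prod_factor r)]
  have hinner : ∀ r : ℕ, ∑' n : ℕ, ((r + n).choose n : ℝ) * x ^ r * y ^ n
      = (1 / (1 - y)) * (x / (1 - y)) ^ r := by
    intro r
    rw [(auxRow hy1 (x ^ r) r).tsum_eq, div_pow, pow_succ, one_div, mul_inv, one_div]
    ring
  simp only [hinner]
  rw [tsum_mul_left, tsum_geometric_of_norm_lt_one (by
    rw [Real.norm_eq_abs, abs_div, abs_of_pos h1y, div_lt_one h1y]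
    calc |x| < 1 - |y| := hx1
    _ ≤ 1 - y := by have := le_abs_self y; linarith)]
  have e : 1 - x / (1 - y) = (1 - x - y) / (1 - y) := by
    field_simp
    ring
  rw [e, inv_div]
  rw [one_div, div_eq_mul_inv, ← mul_assoc, inv_mul_cancel₀ h1y.ne', one_mul, one_div]

lemma auxIntegrable {e s : ℝ} (he : 0 < e) (hs : 0 < s) :
    IntegrableOn (fun t : ℝ => t ^ (e - 1) * Real.exp (-(s * t))) (Set.Ioi 0) := by
  have h0 : IntegrableOn (fun x : ℝ => Real.exp (-x) * x ^ (e - 1)) (Set.Ioi 0) :=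
    Real.GammaIntegral_convergent he
  have h1 : IntegrableOn (fun x : ℝ => Real.exp (-(s * x)) * (s * x) ^ (e - 1)) (Set.Ioi 0) := by
    have := (integrableOn_Ioi_comp_mul_left_iff
      (fun x : ℝ => Real.exp (-x) * x ^ (e - 1)) 0 hs).2 (by rwa [mul_zero])
    exact this
  have h2 : IntegrableOn (fun x : ℝ => s ^ (-(e-1)) * (Real.exp (-(s * x)) * (s * x) ^ (e - 1)))
      (Set.Ioi 0) := h1.const_mul (s ^ (-(e - 1)))
  refine IntegrableOn.congr_fun h2 (fun t ht => ?_) measurableSet_Ioi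
  have ht : (0:ℝ) < t := ht
  rw [Real.mul_rpow hs.le ht.le, Real.rpow_neg hs.le]
  field_simp

lemma auxPoch (r n : ℕ) :
    (ascPochhammer ℝ n).eval ((r : ℝ) + 1) = (n.factorial : ℝ) * ((r + n).choose n : ℝ) := by
  have : ((r : ℝ) + 1) = ((r + 1 : ℕ) : ℝ) := by push_cast; ring
  rw [this, ← ascPochhammer_eval_cast, ascPochhammer_nat_eq_ascFactorial,
    Nat.ascFactorial_eq_factorial_mul_choose]
  push_cast
  ring

/-- Real three-parameter (Prabhakar) Mittag-Leffler function. -/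
noncomputable def mittagLeffler3 (α β δ z : ℝ) : ℝ :=
  ∑' n : ℕ, (ascPochhammer ℝ n).eval δ * z ^ n / (Real.Gamma (n * α + β) * n.factorial)

theorem laplace_series_mittagLeffler3 (α β lam b s : ℝ)
    (hβ : 0 < β) (hαβ : β < α) (hlam : 0 ≤ lam) (hb : 0 ≤ b)
    (hs : 0 < s) (hbig : lam * s ^ β + b < s ^ α) :
    ∫ t in Set.Ioi (0 : ℝ),
      Real.exp (-(s * t)) *
        (∑' r : ℕ, (-lam) ^ r * t ^ ((α - β) * r + α - 1) *
          mittagLeffler3 α (α + (α - β) * r) (r + 1) (-b * t ^ α))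
      = 1 / (s ^ α + lam * s ^ β + b) := by
  have hα : 0 < α := hβ.trans hαβ
  have hc : 0 < α - β := sub_pos.2 hαβ
  have h1s : (0:ℝ) < 1 / s := by positivity
  set E : ℕ × ℕ → ℝ := fun p => (α - β) * p.1 + α + α * p.2 with hEdef
  have hEpos : ∀ p : ℕ × ℕ, 0 < E p := by
    intro p
    have h1 : (0:ℝ) ≤ (α - β) * p.1 := by positivity
    have h2 : (0:ℝ) ≤ α * p.2 := by positivity
    simp only [hEdef]; linarith
  have hΓpos : ∀ p : ℕ × ℕ, 0 < Real.Gamma (E p) := fun p => Real.Gamma_pos_of_pos (hEpos p)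
  set K : ℕ × ℕ → ℝ := fun p => (-lam) ^ p.1 * (-b) ^ p.2 *
      ((p.1 + p.2).choose p.2 : ℝ) / Real.Gamma (E p) with hKdef
  set a : ℕ × ℕ → ℝ → ℝ := fun p t =>
    Real.exp (-(s * t)) * ((-lam) ^ p.1 * t ^ ((α - β) * (p.1:ℝ) + α - 1) *
      ((ascPochhammer ℝ p.2).eval ((p.1 : ℝ) + 1) * (-b * t ^ α) ^ p.2 /
        (Real.Gamma ((p.2 : ℝ) * α + (α + (α - β) * (p.1:ℝ))) * (p.2.factorial : ℝ)))) with hadef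
  -- rewrite of `a` on `Ioi 0`
  have haK : ∀ p : ℕ × ℕ, Set.EqOn (a p)
      (fun t => K p * (t ^ (E p - 1) * Real.exp (-(s * t)))) (Set.Ioi 0) := by
    rintro ⟨r, n⟩ t ht
    have ht0 : (0:ℝ) < t := ht
    have h1 : (-b * t ^ α) ^ n = (-b) ^ n * t ^ (α * (n:ℝ)) := by
      rw [mul_pow, ← Real.rpow_natCast (t ^ α) n, ← Real.rpow_mul ht0.le]
    have h2 : t ^ (E (r, n) - 1) = t ^ ((α - β) * (r:ℝ) + α - 1) * t ^ (α * (n:ℝ)) := by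
      rw [← Real.rpow_add ht0]
      congr 1
      simp only [hEdef]
      ring
    have h3 : (n : ℝ) * α + (α + (α - β) * (r:ℝ)) = E (r, n) := by simp only [hEdef]; ring
    have hfac : (n.factorial : ℝ) ≠ 0 := Nat.cast_ne_zero.2 n.factorial_ne_zero
    have hΓ : Real.Gamma (E (r, n)) ≠ 0 := (hΓpos (r, n)).ne'
    simp only [hadef, hKdef, h1, h3, h2, auxPoch r n]
    field_simp
  have hIntOn : ∀ p : ℕ × ℕ, IntegrableOn (a p) (Set.Ioi 0) := fun p =>
    IntegrableOn.congr_fun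
      ((auxIntegrable (hEpos p) hs).const_mul (K p)) (fun t ht => (haK p ht).symm)
      measurableSet_Ioi
  have hMeas : ∀ p : ℕ × ℕ, AEStronglyMeasurable (a p) (volume.restrict (Set.Ioi 0)) :=
    fun p => (hIntOn p).aestronglyMeasurable
  have hGint : ∀ p : ℕ × ℕ, ∫ t in Set.Ioi (0:ℝ), t ^ (E p - 1) * Real.exp (-(s * t))
      = (1 / s) ^ (E p) * Real.Gamma (E p) :=
    fun p => integral_rpow_mul_exp_neg_mul_Ioi (hEpos p) hs
  -- general decomposition of the integral values
  have hXdec : ∀ (u v : ℝ) (p : ℕ × ℕ),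
      (u ^ p.1 * v ^ p.2 * ((p.1 + p.2).choose p.2 : ℝ) / Real.Gamma (E p)) *
        ((1 / s) ^ (E p) * Real.Gamma (E p)) =
      (1 / s) ^ α * (((p.1 + p.2).choose p.2 : ℝ) * (u * (1 / s) ^ (α - β)) ^ p.1 *
        (v * (1 / s) ^ α) ^ p.2) := by
    intro u v p
    have e1 : (1 / s) ^ ((α - β) * (p.1 : ℝ)) = ((1 / s) ^ (α - β)) ^ p.1 := by
      rw [Real.rpow_mul h1s.le, Real.rpow_natCast]
    have e2 : (1 / s) ^ (α * (p.2 : ℝ)) = ((1 / s) ^ α) ^ p.2 := by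
      rw [Real.rpow_mul h1s.le, Real.rpow_natCast]
    have e3 : (1 / s) ^ (E p)
        = (1/s) ^ ((α - β) * (p.1:ℝ)) * (1/s) ^ α * (1/s) ^ (α * (p.2:ℝ)) := by
      rw [← Real.rpow_add h1s, ← Real.rpow_add h1s]
    have hΓ : Real.Gamma (E p) ≠ 0 := (hΓpos p).ne'
    rw [e3, e1, e2, mul_pow, mul_pow]
    field_simp
  have hIa : ∀ p : ℕ × ℕ, ∫ t in Set.Ioi (0:ℝ), a p t
      = (1 / s) ^ α * (((p.1 + p.2).choose p.2 : ℝ) * (-lam * (1 / s) ^ (α - β)) ^ p.1 *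
        (-b * (1 / s) ^ α) ^ p.2) := by
    intro p
    rw [setIntegral_congr_fun measurableSet_Ioi (haK p), MeasureTheory.integral_const_mul,
      hGint p, hKdef]
    exact hXdec (-lam) (-b) p
  -- norms
  have hK'val : ∀ p : ℕ × ℕ,
      (|K p| * ((1 / s) ^ (E p) * Real.Gamma (E p)))
      = (1 / s) ^ α * (((p.1 + p.2).choose p.2 : ℝ) * (lam * (1 / s) ^ (α - β)) ^ p.1 *
        (b * (1 / s) ^ α) ^ p.2) := by
    intro p
    have : |K p| = lam ^ p.1 * b ^ p.2 * ((p.1 + p.2).choose p.2 : ℝ) / Real.Gamma (E p) := by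
      rw [hKdef]
      rw [abs_div, abs_mul, abs_mul, abs_pow, abs_pow, abs_neg, abs_neg,
        abs_of_nonneg hlam, abs_of_nonneg hb, Nat.abs_cast, abs_of_pos (hΓpos p)]
    rw [this]
    exact hXdec lam b p
  have hnormval : ∀ p : ℕ × ℕ, ∫ t in Set.Ioi (0:ℝ), ‖a p t‖
      = |K p| * ((1 / s) ^ (E p) * Real.Gamma (E p)) := by
    intro p
    have heq : Set.EqOn (fun t => ‖a p t‖)
        (fun t => |K p| * (t ^ (E p - 1) * Real.exp (-(s * t)))) (Set.Ioi 0) := by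
      intro t ht
      have ht0 : (0:ℝ) < t := ht
      simp only [Real.norm_eq_abs, haK p ht, abs_mul]
      rw [abs_of_pos (Real.rpow_pos_of_pos ht0 _), abs_of_pos (Real.exp_pos _)]
    rw [setIntegral_congr_fun measurableSet_Ioi heq, MeasureTheory.integral_const_mul, hGint p]
  have hlint : ∀ p : ℕ × ℕ, ∫⁻ t in Set.Ioi (0:ℝ), ‖a p t‖₊
      = ENNReal.ofReal (|K p| * ((1 / s) ^ (E p) * Real.Gamma (E p))) := by
    intro p
    have := ofReal_integral_norm_eq_lintegral_enorm (hIntOn p)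
    rw [hnormval p] at this
    exact this.symm
  -- the crucial smallness facts
  set Xa : ℝ := lam * (1 / s) ^ (α - β) with hXa
  set Ya : ℝ := b * (1 / s) ^ α with hYa
  have hXa0 : 0 ≤ Xa := by rw [hXa]; positivity
  have hYa0 : 0 ≤ Ya := by rw [hYa]; positivity
  have hApos : (0:ℝ) < s ^ α := Real.rpow_pos_of_pos hs α
  have hBpos : (0:ℝ) < s ^ β := Real.rpow_pos_of_pos hs β
  have hXYsum : Xa + Ya = (lam * s ^ β + b) / s ^ α := by
    rw [hXa, hYa, one_div, Real.inv_rpow hs.le, Real.inv_rpow hs.le, Real.rpow_sub hs]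
    field_simp
  have hsmall : Xa + Ya < 1 := by
    rw [hXYsum, div_lt_one hApos]; exact hbig
  have habs : |Xa| + |Ya| < 1 := by rwa [abs_of_nonneg hXa0, abs_of_nonneg hYa0]
  have habs' : |(-lam * (1 / s) ^ (α - β))| + |(-b * (1 / s) ^ α)| < 1 := by
    rwa [abs_mul, abs_neg, abs_of_nonneg hlam, abs_mul, abs_neg, abs_of_nonneg hb,
      abs_of_nonneg (Real.rpow_pos_of_pos h1s _).le, abs_of_nonneg (Real.rpow_pos_of_pos h1s _).le]
  -- summability of the bounds
  have hwsum : Summable (fun p : ℕ × ℕ =>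
      (1 / s) ^ α * (((p.1 + p.2).choose p.2 : ℝ) * Xa ^ p.1 * Ya ^ p.2)) :=
    (auxSummable habs).mul_left _
  have hwpos : ∀ p : ℕ × ℕ,
      0 ≤ (1 / s) ^ α * (((p.1 + p.2).choose p.2 : ℝ) * Xa ^ p.1 * Ya ^ p.2) := by
    intro p
    have := Real.rpow_pos_of_pos h1s α
    positivity
  have hne : ∑' p : ℕ × ℕ, ∫⁻ t in Set.Ioi (0:ℝ), ‖a p t‖₊ ≠ ⊤ := by
    have : ∀ p : ℕ × ℕ, ∫⁻ t in Set.Ioi (0:ℝ), ‖a p t‖₊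
        = ENNReal.ofReal ((1 / s) ^ α * (((p.1 + p.2).choose p.2 : ℝ) * Xa ^ p.1 * Ya ^ p.2)) := by
      intro p
      rw [hlint p, hK'val p]
    simp only [this]
    rw [← ENNReal.ofReal_tsum_of_nonneg hwpos hwsum]
    exact ENNReal.ofReal_ne_top
  -- a.e. summability
  have h_ae_sum : ∀ᵐ t ∂(volume.restrict (Set.Ioi (0:ℝ))), Summable fun p : ℕ × ℕ => a p t := by
    have hlt : ∫⁻ t in Set.Ioi (0:ℝ), ∑' p : ℕ × ℕ, (‖a p t‖₊ : ENNReal) ≠ ⊤ := by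
      rw [lintegral_tsum (f := fun p t => (‖a p t‖₊ : ENNReal)) (fun p => (hMeas p).enorm)]; exact hne
    filter_upwards [ae_lt_top' (AEMeasurable.ennreal_tsum fun p => (hMeas p).enorm) hlt] with t ht
    have h1 : Summable fun p : ℕ × ℕ => ‖a p t‖₊ := ENNReal.tsum_coe_ne_top_iff_summable.1 ht.ne
    have h2 : Summable fun p : ℕ × ℕ => ‖a p t‖ := by
      have := NNReal.summable_coe.2 h1
      simpa [coe_nnnorm] using this
    exact h2.of_norm
  -- a.e. identification of the integrand with the double sum
  have h_ae : ∀ᵐ t ∂(volume.restrict (Set.Ioi (0:ℝ))),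
      Real.exp (-(s * t)) *
        (∑' r : ℕ, (-lam) ^ r * t ^ ((α - β) * r + α - 1) *
          mittagLeffler3 α (α + (α - β) * r) (r + 1) (-b * t ^ α))
      = ∑' p : ℕ × ℕ, a p t := by
    filter_upwards [h_ae_sum] with t ht
    rw [Summable.tsum_prod' ht (fun r => ht.prod_factor r), ← tsum_mul_left]
    refine tsum_congr fun r => ?_
    rw [mittagLeffler3, ← mul_assoc, ← tsum_mul_left]
    exact tsum_congr fun n => by simp only [hadef]; ring
  -- put everything together
  calc ∫ t in Set.Ioi (0 : ℝ),
      Real.exp (-(s * t)) *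
        (∑' r : ℕ, (-lam) ^ r * t ^ ((α - β) * r + α - 1) *
          mittagLeffler3 α (α + (α - β) * r) (r + 1) (-b * t ^ α))
      = ∫ t in Set.Ioi (0:ℝ), ∑' p : ℕ × ℕ, a p t := integral_congr_ae h_ae
    _ = ∑' p : ℕ × ℕ, ∫ t in Set.Ioi (0:ℝ), a p t := integral_tsum hMeas hne
    _ = ∑' p : ℕ × ℕ, (1 / s) ^ α * (((p.1 + p.2).choose p.2 : ℝ) *
          (-lam * (1 / s) ^ (α - β)) ^ p.1 * (-b * (1 / s) ^ α) ^ p.2) := tsum_congr hIa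
    _ = (1 / s) ^ α * (1 / (1 - (-lam * (1 / s) ^ (α - β)) - (-b * (1 / s) ^ α))) := by
        rw [tsum_mul_left, auxTsum habs']
    _ = 1 / (s ^ α + lam * s ^ β + b) := by
        have h1 : (1 / s) ^ α = (s ^ α)⁻¹ := by rw [one_div, Real.inv_rpow hs.le]
        have h2 : (1 / s) ^ (α - β) = s ^ β / s ^ α := by
          rw [one_div, Real.inv_rpow hs.le, Real.rpow_sub hs, inv_div]
        have hden : (0:ℝ) < s ^ α + lam * s ^ β + b := by positivity
        rw [h1, h2]
        have hden2 : 1 - -lam * (s ^ β / s ^ α) - -b * (s ^ α)⁻¹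
            = (s ^ α + lam * s ^ β + b) / s ^ α := by
          field_simp
          ring
        rw [hden2, one_div, inv_div, div_eq_mul_inv, ← mul_assoc,
          inv_mul_cancel₀ hApos.ne', one_mul, one_div]
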